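/- Let p > 1, N ≥ 1, and let η, η′, ξ ∈ ℝ^N satisfy |η−ξ| + |η′−ξ| > 0. Then |Φ_p(η,ξ) − Φ_p(η′,ξ)| ≤ max{p−1, 2^{2−p}} (|η−ξ| + |η′−ξ|)^{p−2} |η−η′|. -/

import Mathlib

open Real

/-- Tangent-line (concavity) bound: for `0 ≤ q ≤ 1`, `m > 0`, `x ≥ 0`,
`x ^ q ≤ m ^ q + q * m ^ (q-1) * (x - m)`. -/
lemma tangent_le {q m x : ℝ} (hq0 : 0 ≤ q) (hq1 : q ≤ 1) (hm : 0 < m) (hx : 0 ≤ x) :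
    x ^ q ≤ m ^ q + q * m ^ (q - 1) * (x - m) := by
  have hym : -1 ≤ x / m - 1 := by
    have : 0 ≤ x / m := div_nonneg hx hm.le
    linarith
  have h1 : (1 + (x / m - 1)) ^ q ≤ 1 + q * (x / m - 1) :=
    rpow_one_add_le_one_add_mul_self hym hq0 hq1
  have h2 : (x / m) ^ q ≤ 1 + q * (x / m - 1) := by
    simpa using h1
  have h3 : (x / m) ^ q = x ^ q / m ^ q := div_rpow hx hm.le q
  have hmq : 0 < m ^ q := rpow_pos_of_pos hm q
  have h4 : x ^ q ≤ (1 + q * (x / m - 1)) * m ^ q := by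
    rw [h3] at h2
    calc x ^ q = x ^ q / m ^ q * m ^ q := by field_simp
    _ ≤ (1 + q * (x / m - 1)) * m ^ q := by
        exact mul_le_mul_of_nonneg_right h2 hmq.le
  have h5 : m ^ (q - 1) = m ^ q / m := rpow_sub_one hm.ne' q
  calc x ^ q ≤ (1 + q * (x / m - 1)) * m ^ q := h4
  _ = m ^ q + q * (m ^ q / m) * (x - m) := by field_simp
  _ = m ^ q + q * m ^ (q - 1) * (x - m) := by rw [h5]

/-- Tangent-line (convexity) bound: for `1 ≤ q`, `m > 0`, `x ≥ 0`,
`m ^ q + q * m ^ (q-1) * (x - m) ≤ x ^ q`. -/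
lemma tangent_ge {q m x : ℝ} (hq : 1 ≤ q) (hm : 0 < m) (hx : 0 ≤ x) :
    m ^ q + q * m ^ (q - 1) * (x - m) ≤ x ^ q := by
  have hym : -1 ≤ x / m - 1 := by
    have : 0 ≤ x / m := div_nonneg hx hm.le
    linarith
  have h1 : 1 + q * (x / m - 1) ≤ (1 + (x / m - 1)) ^ q :=
    one_add_mul_self_le_rpow_one_add hym hq
  have h2 : 1 + q * (x / m - 1) ≤ (x / m) ^ q := by
    simpa using h1
  have h3 : (x / m) ^ q = x ^ q / m ^ q := div_rpow hx hm.le q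
  have hmq : 0 < m ^ q := rpow_pos_of_pos hm q
  have h4 : (1 + q * (x / m - 1)) * m ^ q ≤ x ^ q := by
    rw [h3] at h2
    calc (1 + q * (x / m - 1)) * m ^ q ≤ x ^ q / m ^ q * m ^ q :=
          mul_le_mul_of_nonneg_right h2 hmq.le
    _ = x ^ q := by field_simp
  have h5 : m ^ (q - 1) = m ^ q / m := rpow_sub_one hm.ne' q
  calc m ^ q + q * m ^ (q - 1) * (x - m)
      = m ^ q + q * (m ^ q / m) * (x - m) := by rw [h5]
  _ = (1 + q * (x / m - 1)) * m ^ q := by field_simp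
  _ ≤ x ^ q := h4

/-- Scalar inequality, sum form: `s^{p-1} + r^{p-1} ≤ C (s+r)^{p-1}`. -/
lemma scalar_sum (p : ℝ) (hp : 1 < p) {s r : ℝ} (hs : 0 ≤ s) (hr : 0 ≤ r)
    (hsr : 0 < s + r) :
    s ^ (p - 1) + r ^ (p - 1)
      ≤ max (p - 1) (2 ^ (2 - p)) * (s + r) ^ (p - 1) := by
  have hq0 : (0:ℝ) < p - 1 := by linarith
  rcases le_total p 2 with hp2 | hp2
  · -- 1 < p ≤ 2 : concavity, constant 2^(2-p)
    have hm : 0 < (s + r) / 2 := by linarith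
    have h1 := tangent_le (q := p - 1) (m := (s + r) / 2) (x := s) hq0.le
      (by linarith) hm hs
    have h2 := tangent_le (q := p - 1) (m := (s + r) / 2) (x := r) hq0.le
      (by linarith) hm hr
    have hsum : s ^ (p - 1) + r ^ (p - 1) ≤ 2 * ((s + r) / 2) ^ (p - 1) := by
      nlinarith [h1, h2]
    have hdiv : ((s + r) / 2) ^ (p - 1) = (s + r) ^ (p - 1) / 2 ^ (p - 1) :=
      div_rpow hsr.le (by norm_num) _
    have h2p : (2:ℝ) ^ (2 - p) * 2 ^ (p - 1) = 2 := by
      rw [← rpow_add (by norm_num : (0:ℝ) < 2)]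
      norm_num
    have h2pos : (0:ℝ) < 2 ^ (p - 1) := rpow_pos_of_pos (by norm_num) _
    have key : s ^ (p - 1) + r ^ (p - 1) ≤ 2 ^ (2 - p) * (s + r) ^ (p - 1) := by
      rw [hdiv] at hsum
      rw [show (2:ℝ) ^ (2 - p) * (s + r) ^ (p - 1)
          = 2 ^ (2 - p) * 2 ^ (p - 1) * ((s + r) ^ (p - 1) / 2 ^ (p - 1)) by
        field_simp]
      rw [h2p]
      exact hsum
    calc s ^ (p - 1) + r ^ (p - 1) ≤ 2 ^ (2 - p) * (s + r) ^ (p - 1) := key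
    _ ≤ max (p - 1) (2 ^ (2 - p)) * (s + r) ^ (p - 1) := by
        apply mul_le_mul_of_nonneg_right (le_max_right _ _)
        exact (rpow_pos_of_pos hsr _).le
  · -- p ≥ 2 : superadditivity, constant p - 1 ≥ 1
    have hs' : s ^ (p - 1) ≤ s * (s + r) ^ (p - 2) := by
      rcases eq_or_lt_of_le hs with h0 | h0
      · rw [← h0, zero_rpow hq0.ne', zero_mul]
      · rw [show p - 1 = (p - 2) + 1 by ring, rpow_add_one h0.ne']
        rw [mul_comm]
        exact mul_le_mul_of_nonneg_left (rpow_le_rpow hs (by linarith) (by linarith)) hs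
    have hr' : r ^ (p - 1) ≤ r * (s + r) ^ (p - 2) := by
      rcases eq_or_lt_of_le hr with h0 | h0
      · rw [← h0, zero_rpow hq0.ne', zero_mul]
      · rw [show p - 1 = (p - 2) + 1 by ring, rpow_add_one h0.ne']
        rw [mul_comm]
        exact mul_le_mul_of_nonneg_left (rpow_le_rpow hr (by linarith) (by linarith)) hr
    have hsum : s ^ (p - 1) + r ^ (p - 1) ≤ (s + r) * (s + r) ^ (p - 2) := by
      nlinarith [hs', hr']
    have heq : (s + r) * (s + r) ^ (p - 2) = (s + r) ^ (p - 1) := by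
      rw [show p - 1 = (p - 2) + 1 by ring, rpow_add_one hsr.ne']
      ring
    rw [heq] at hsum
    calc s ^ (p - 1) + r ^ (p - 1) ≤ 1 * (s + r) ^ (p - 1) := by rw [one_mul]; exact hsum
    _ ≤ max (p - 1) (2 ^ (2 - p)) * (s + r) ^ (p - 1) := by
        apply mul_le_mul_of_nonneg_right _ (rpow_pos_of_pos hsr _).le
        exact le_trans (by linarith) (le_max_left _ _)

/-- Scalar inequality, difference form: for `0 ≤ r ≤ s`,
`s^{p-1} - r^{p-1} ≤ C (s+r)^{p-2} (s-r)`. -/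
lemma scalar_diff (p : ℝ) (hp : 1 < p) {s r : ℝ} (hr : 0 ≤ r) (hrs : r ≤ s)
    (hsr : 0 < s + r) :
    s ^ (p - 1) - r ^ (p - 1)
      ≤ max (p - 1) (2 ^ (2 - p)) * (s + r) ^ (p - 2) * (s - r) := by
  have hq0 : (0:ℝ) < p - 1 := by linarith
  have hs : 0 < s := by linarith
  rcases le_total p 2 with hp2 | hp2
  · -- 1 < p ≤ 2
    set m : ℝ := (s + r) / 2 with hm_def
    have hm : 0 < m := by simp only [hm_def]; linarith
    have h1 : s ^ (p - 1) ≤ m ^ (p - 1) + (p - 1) * m ^ (p - 2) * (s - m) := by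
      have := tangent_le (q := p - 1) (m := m) (x := s) hq0.le (by linarith) hm hs.le
      rwa [show p - 1 - 1 = p - 2 by ring] at this
    have h2 : m ^ (p - 2) * r ≤ r ^ (p - 1) := by
      rcases eq_or_lt_of_le hr with h0 | h0
      · rw [← h0, mul_zero, zero_rpow hq0.ne']
      · have hrm : r ≤ m := by simp only [hm_def]; linarith
        have hmono : m ^ (p - 2) ≤ r ^ (p - 2) :=
          rpow_le_rpow_of_nonpos h0 hrm (by linarith)
        calc m ^ (p - 2) * r ≤ r ^ (p - 2) * r := mul_le_mul_of_nonneg_right hmono hr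
        _ = r ^ (p - 1) := by
            rw [show p - 1 = (p - 2) + 1 by ring, rpow_add_one h0.ne']
    have hmq : m ^ (p - 1) = m ^ (p - 2) * m := by
      rw [show p - 1 = (p - 2) + 1 by ring, rpow_add_one hm.ne']
    have hmp2 : 0 ≤ m ^ (p - 2) := (rpow_pos_of_pos hm _).le
    have hmain : s ^ (p - 1) - r ^ (p - 1) ≤ m ^ (p - 2) * (s - r) := by
      have hsm : s - m = (s - r) / 2 := by simp only [hm_def]; ring
      have hmr : m + (p - 1) * (s - m) - r = (1 + (p - 1)) / 2 * (s - r) := by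
        simp only [hm_def]; ring
      have hfac : (1 + (p - 1)) / 2 ≤ 1 := by linarith
      calc s ^ (p - 1) - r ^ (p - 1)
          ≤ m ^ (p - 1) + (p - 1) * m ^ (p - 2) * (s - m) - m ^ (p - 2) * r := by
            linarith [h1, h2]
      _ = m ^ (p - 2) * ((1 + (p - 1)) / 2 * (s - r)) := by
          rw [hmq]; nlinarith [hmr]
      _ ≤ m ^ (p - 2) * (1 * (s - r)) := by
          apply mul_le_mul_of_nonneg_left _ hmp2
          apply mul_le_mul_of_nonneg_right hfac (by linarith)
      _ = m ^ (p - 2) * (s - r) := by ring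
    have hmeq : m ^ (p - 2) = 2 ^ (2 - p) * (s + r) ^ (p - 2) := by
      have : m ^ (p - 2) = (s + r) ^ (p - 2) / 2 ^ (p - 2) := by
        simp only [hm_def]
        exact div_rpow hsr.le (by norm_num) _
      rw [this]
      rw [show (2:ℝ) ^ (2 - p) = (2 ^ (p - 2) : ℝ)⁻¹ by
        rw [← rpow_neg (by norm_num : (0:ℝ) ≤ 2)]; norm_num]
      field_simp
    rw [hmeq] at hmain
    calc s ^ (p - 1) - r ^ (p - 1) ≤ 2 ^ (2 - p) * (s + r) ^ (p - 2) * (s - r) := hmain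
    _ ≤ max (p - 1) (2 ^ (2 - p)) * (s + r) ^ (p - 2) * (s - r) := by
        apply mul_le_mul_of_nonneg_right _ (by linarith)
        apply mul_le_mul_of_nonneg_right (le_max_right _ _)
        exact (rpow_pos_of_pos hsr _).le
  · -- p ≥ 2
    have h1 : s ^ (p - 1) + (p - 1) * s ^ (p - 2) * (r - s) ≤ r ^ (p - 1) := by
      have := tangent_ge (q := p - 1) (m := s) (x := r) (by linarith) hs hr
      rwa [show p - 1 - 1 = p - 2 by ring] at this
    have h2 : s ^ (p - 2) ≤ (s + r) ^ (p - 2) :=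
      rpow_le_rpow hs.le (by linarith) (by linarith)
    have hmain : s ^ (p - 1) - r ^ (p - 1) ≤ (p - 1) * (s + r) ^ (p - 2) * (s - r) := by
      have : s ^ (p - 1) - r ^ (p - 1) ≤ (p - 1) * s ^ (p - 2) * (s - r) := by linarith
      calc s ^ (p - 1) - r ^ (p - 1) ≤ (p - 1) * s ^ (p - 2) * (s - r) := this
      _ ≤ (p - 1) * (s + r) ^ (p - 2) * (s - r) := by
          apply mul_le_mul_of_nonneg_right _ (by linarith)
          apply mul_le_mul_of_nonneg_left h2 (by linarith)
    calc s ^ (p - 1) - r ^ (p - 1) ≤ (p - 1) * (s + r) ^ (p - 2) * (s - r) := hmain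
    _ ≤ max (p - 1) (2 ^ (2 - p)) * (s + r) ^ (p - 2) * (s - r) := by
        apply mul_le_mul_of_nonneg_right _ (by linarith)
        apply mul_le_mul_of_nonneg_right (le_max_left _ _)
        exact (rpow_pos_of_pos hsr _).le

set_option maxHeartbeats 1000000 in
/-- Key vector inequality for `F(x) = |x|^{p-2} x`. -/
lemma key_vector (p : ℝ) (hp : 1 < p) {N : ℕ} (a b : EuclideanSpace ℝ (Fin N))
    (h : 0 < ‖a‖ + ‖b‖) :
    ‖(‖a‖ ^ (p - 2)) • a - (‖b‖ ^ (p - 2)) • b‖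
      ≤ max (p - 1) (2 ^ (2 - p)) * (‖a‖ + ‖b‖) ^ (p - 2) * ‖a - b‖ := by
  set s : ℝ := ‖a‖ with hs_def
  set r : ℝ := ‖b‖ with hr_def
  set C : ℝ := max (p - 1) (2 ^ (2 - p)) with hC_def
  set A : ℝ := s ^ (p - 2) with hA_def
  set B : ℝ := r ^ (p - 2) with hB_def
  set K : ℝ := C * (s + r) ^ (p - 2) with hK_def
  have hs : 0 ≤ s := norm_nonneg a
  have hr : 0 ≤ r := norm_nonneg b
  have hA : 0 ≤ A := rpow_nonneg hs _
  have hB : 0 ≤ B := rpow_nonneg hr _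
  have hC : 0 < C := lt_of_lt_of_le (rpow_pos_of_pos (by norm_num) (2 - p))
    (le_max_right _ _)
  have hK : 0 ≤ K := mul_nonneg hC.le (rpow_pos_of_pos h _).le
  have hq0 : (0:ℝ) < p - 1 := by linarith
  have hAs : A * s = s ^ (p - 1) := by
    rcases eq_or_lt_of_le hs with h0 | h0
    · rw [hA_def, ← h0, mul_zero, zero_rpow hq0.ne']
    · rw [hA_def, show p - 1 = (p - 2) + 1 by ring, rpow_add_one h0.ne']
  have hBr : B * r = r ^ (p - 1) := by
    rcases eq_or_lt_of_le hr with h0 | h0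
    · rw [hB_def, ← h0, mul_zero, zero_rpow hq0.ne']
    · rw [hB_def, show p - 1 = (p - 2) + 1 by ring, rpow_add_one h0.ne']
  have hKsum : K * (s + r) = C * (s + r) ^ (p - 1) := by
    rw [hK_def, mul_assoc, show p - 1 = (p - 2) + 1 by ring, rpow_add_one h.ne']
  -- endpoint estimate 2 : sum
  have E2 : A * s + B * r ≤ K * (s + r) := by
    rw [hAs, hBr, hKsum]
    exact scalar_sum p hp hs hr h
  -- endpoint estimate 1 : difference, squared (to get symmetry)
  have E1 : (A * s - B * r) ^ 2 ≤ K ^ 2 * (s - r) ^ 2 := by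
    rcases le_total r s with hd | hd
    · have hdiff : A * s - B * r ≤ K * (s - r) := by
        rw [hAs, hBr, hK_def]
        exact scalar_diff p hp hr hd h
      have hge : 0 ≤ A * s - B * r := by
        rw [hAs, hBr]
        have := rpow_le_rpow hr hd hq0.le
        linarith
      have hKd : 0 ≤ K * (s - r) := mul_nonneg hK (by linarith)
      nlinarith [hdiff, hge, hKd]
    · have hsr' : 0 < r + s := by linarith
      have hdiff : B * r - A * s ≤ K * (r - s) := by
        rw [hAs, hBr, hK_def, show s + r = r + s by ring]
        exact scalar_diff p hp hs hd hsr'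
      have hge : 0 ≤ B * r - A * s := by
        rw [hAs, hBr]
        have := rpow_le_rpow hs hd hq0.le
        linarith
      have hKd : 0 ≤ K * (r - s) := mul_nonneg hK (by linarith)
      nlinarith [hdiff, hge, hKd]
  have E2sq : (A * s + B * r) ^ 2 ≤ K ^ 2 * (s + r) ^ 2 := by
    have h0 : 0 ≤ A * s + B * r := by positivity
    nlinarith [E2, h0]
  -- inner product expansion
  set t : ℝ := inner ℝ a b with ht_def
  have ht : |t| ≤ s * r := abs_real_inner_le_norm a b
  have htl : -(s * r) ≤ t := (abs_le.mp ht).1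
  have htr : t ≤ s * r := (abs_le.mp ht).2
  have expand1 : ‖A • a - B • b‖ ^ 2 = A ^ 2 * s ^ 2 - 2 * (A * B) * t + B ^ 2 * r ^ 2 := by
    rw [norm_sub_sq_real]
    rw [norm_smul, norm_smul, real_inner_smul_left, real_inner_smul_right]
    rw [Real.norm_eq_abs, Real.norm_eq_abs, abs_of_nonneg hA, abs_of_nonneg hB]
    rw [← hs_def, ← hr_def, ← ht_def]
    ring
  have expand2 : ‖a - b‖ ^ 2 = s ^ 2 - 2 * t + r ^ 2 := by
    rw [norm_sub_sq_real, ← hs_def, ← hr_def, ← ht_def]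
  -- main quadratic comparison
  have main_sq : ‖A • a - B • b‖ ^ 2 ≤ (K * ‖a - b‖) ^ 2 := by
    rw [expand1, mul_pow, expand2]
    rcases le_total (A * B) (K ^ 2) with hc | hc
    · nlinarith [mul_nonneg (sub_nonneg.mpr hc) (sub_nonneg.mpr htr), E1]
    · nlinarith [mul_nonneg (sub_nonneg.mpr hc) (by linarith : (0:ℝ) ≤ s * r + t), E2sq]
  have hRHS : 0 ≤ K * ‖a - b‖ := mul_nonneg hK (norm_nonneg _)
  have := (pow_le_pow_iff_left₀ (norm_nonneg (A • a - B • b)) hRHS two_ne_zero).mp main_sq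
  calc ‖A • a - B • b‖ ≤ K * ‖a - b‖ := this
  _ = C * (s + r) ^ (p - 2) * ‖a - b‖ := by rw [hK_def]

/-- The translated p-Laplacian nonlinearity
`Φ_p(η,ξ) = |η−ξ|^{p−2}(η−ξ) + |ξ|^{p−2}ξ`
(with the convention `|x|^{p−2}x = 0` when `x = 0`). -/
noncomputable def Phi (p : ℝ) {N : ℕ} (η ξ : EuclideanSpace ℝ (Fin N)) :
    EuclideanSpace ℝ (Fin N) :=
  (‖η - ξ‖ ^ (p - 2)) • (η - ξ) + (‖ξ‖ ^ (p - 2)) • ξ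

/-- Lemma 3.1, inequality (3.4): for `p > 1` and `|η−ξ| + |η′−ξ| > 0`,
`|Φ_p(η,ξ) − Φ_p(η′,ξ)| ≤ max{p−1, 2^{2−p}} (|η−ξ| + |η′−ξ|)^{p−2} |η−η′|`. -/
theorem phi_difference_norm_upper_bound (p : ℝ) (hp : 1 < p) (N : ℕ) (hN : 1 ≤ N)
    (η η' ξ : EuclideanSpace ℝ (Fin N)) (h : 0 < ‖η - ξ‖ + ‖η' - ξ‖) :
    ‖Phi p η ξ - Phi p η' ξ‖
      ≤ max (p - 1) (2 ^ (2 - p)) * (‖η - ξ‖ + ‖η' - ξ‖) ^ (p - 2) * ‖η - η'‖ := by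
  have hdiff : Phi p η ξ - Phi p η' ξ
      = (‖η - ξ‖ ^ (p - 2)) • (η - ξ) - (‖η' - ξ‖ ^ (p - 2)) • (η' - ξ) := by
    unfold Phi
    abel
  have hsub : η - η' = (η - ξ) - (η' - ξ) := by abel
  rw [hdiff, hsub]
  exact key_vector p hp (η - ξ) (η' - ξ) h
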